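/- Let θ = (θ_1,…,θ_k) be a probability vector with all θ_i > 0. For α > 0 define τ(θ,α)_i = θ_i^α / Σ_j θ_j^α, and the cross-entropy H(τ(θ,α)‖θ) = Σ_i τ(θ,α)_i·log(1/θ_i), and the cross-varentropy V(τ(θ,α)‖θ) = Σ_i τ(θ,α)_i·(log(1/θ_i) - H(τ(θ,α)‖θ))². Then d/dα [V(τ(θ,α)‖θ)]|_{α=1} = -S(θ), where S(θ) = Σ_i θ_i·(log(1/θ_i) - H(θ))³ and H(θ) = Σ_i θ_i·log(1/θ_i). -/

import Mathlib

theorem stmt_18 {k : ℕ} (θ : Fin k → ℝ)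
    (hpos : ∀ i, 0 < θ i) (hsum : ∑ i, θ i = 1)
    (H S : ℝ)
    (hH : H = ∑ i, θ i * Real.log (1 / θ i))
    (hS : S = ∑ i, θ i * (Real.log (1 / θ i) - H) ^ 3) :
    HasDerivAt
      (fun α : ℝ =>
        ∑ i, (θ i ^ α / ∑ j, θ j ^ α) *
          (Real.log (1 / θ i)
            - ∑ i', (θ i' ^ α / ∑ j, θ j ^ α) * Real.log (1 / θ i')) ^ 2)
      (-S) 1 := by
  have hθ0 : ∀ i, θ i ≠ 0 := fun i => (hpos i).ne'
  set L : Fin k → ℝ := fun i => Real.log (1 / θ i) with hLdef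
  have hlog : ∀ i, Real.log (θ i) = -(L i) := by
    intro i; simp [hLdef, Real.log_inv]
  have hZ : HasDerivAt (fun α : ℝ => ∑ j, θ j ^ α)
      (∑ j, θ j * Real.log (θ j)) 1 := by
    have h : ∀ j ∈ Finset.univ, HasDerivAt (fun α : ℝ => θ j ^ α)
        (θ j * Real.log (θ j)) 1 := by
      intro j _
      simpa [Real.rpow_one] using
        (Real.hasStrictDerivAt_const_rpow (hpos j) 1).hasDerivAt
    simpa using HasDerivAt.fun_sum h
  have hZ1 : (∑ j, θ j ^ (1:ℝ)) = 1 := by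
    simpa [Real.rpow_one] using hsum
  set Z' : ℝ := ∑ j, θ j * Real.log (θ j) with hZ'def
  have hZ'val : Z' = -H := by
    have h : ∀ i, θ i * Real.log (θ i) = -(θ i * L i) := fun i => by
      rw [hlog i]; ring
    simp only [hZ'def, h, Finset.sum_neg_distrib, hH, hLdef]
  -- derivative of p i
  have hp : ∀ i, HasDerivAt (fun α : ℝ => θ i ^ α / ∑ j, θ j ^ α)
      (-(θ i * (L i - H))) 1 := by
    intro i
    have h := ((Real.hasStrictDerivAt_const_rpow (hpos i) 1).hasDerivAt).fun_div hZ
      (by rw [hZ1]; exact one_ne_zero)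
    refine h.congr_deriv ?_
    rw [hZ1]
    simp only [Real.rpow_one, hlog i, ← hZ'def, hZ'val]
    ring
  have hp1 : ∀ i, (fun α : ℝ => θ i ^ α / ∑ j, θ j ^ α) 1 = θ i := by
    intro i; simp [Real.rpow_one, hsum]
  -- derivative of H(α)
  have hHd : HasDerivAt (fun α : ℝ => ∑ i', (θ i' ^ α / ∑ j, θ j ^ α) * L i')
      (∑ i', -(θ i' * (L i' - H)) * L i') 1 :=
    HasDerivAt.fun_sum fun i _ => (hp i).mul_const (L i)
  have hH1 : (∑ i', (θ i' ^ (1:ℝ) / ∑ j, θ j ^ (1:ℝ)) * L i') = H := by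
    simp only [Real.rpow_one, hsum, div_one, hLdef, ← hH]
  set D' : ℝ := ∑ i', -(θ i' * (L i' - H)) * L i' with hD'def
  have key : HasDerivAt
      (fun α : ℝ =>
        ∑ i, (θ i ^ α / ∑ j, θ j ^ α) *
          (L i - ∑ i', (θ i' ^ α / ∑ j, θ j ^ α) * L i') ^ 2)
      (∑ i, (-(θ i * (L i - H)) * (L i - H) ^ 2 +
        θ i * (2 * (L i - H) ^ 1 * (0 - D')))) 1 := by
    refine HasDerivAt.fun_sum fun i _ => ?_
    have hsub : HasDerivAt
        (fun α : ℝ => L i - ∑ i', (θ i' ^ α / ∑ j, θ j ^ α) * L i')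
        (0 - D') 1 := (hasDerivAt_const 1 (L i)).sub hHd
    have hpow := hsub.fun_pow 2
    have := (hp i).fun_mul hpow
    refine this.congr_deriv ?_
    simp only [Real.rpow_one, hsum, div_one, hLdef, ← hH]
    push_cast
    ring
  convert key using 1
  -- algebra: show -S equals the computed derivative
  have hc0 : ∑ i, θ i * (L i - H) = 0 := by
    rw [Finset.sum_congr rfl (fun i _ => mul_sub (θ i) (L i) H), Finset.sum_sub_distrib,
      ← Finset.sum_mul, hsum, ← hH]
    ring
  have : (∑ i, (-(θ i * (L i - H)) * (L i - H) ^ 2 +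
        θ i * (2 * (L i - H) ^ 1 * (0 - D')))) =
      (∑ i, -(θ i * (L i - H) ^ 3)) + (-2 * D') * ∑ i, θ i * (L i - H) := by
    rw [Finset.mul_sum, ← Finset.sum_add_distrib]
    exact Finset.sum_congr rfl fun i _ => by ring
  rw [this, hc0, hS, ← Finset.sum_neg_distrib]
  ring
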